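/- Let M₀, M₁ be countable transitive models of ZFC. Suppose M₀ ⊨ 'P is a poset, p ∈ P, and p forces that ẋ ∈ ω^ω is an increasing function not eventually dominated by any ground model function', and similarly M₁ ⊨ 'Q is a poset, q ∈ Q, and q forces that ẏ ∈ ω^ω is an increasing function not eventually dominated by any ground model function'. Then for any f ∈ ω^ω there exist an M₀-generic filter G ⊆ P with p ∈ G and an M₁-generic filter H ⊆ Q with q ∈ H such that the function n ↦ max{(ẋ/G)(n), (ẏ/H)(n)} eventually dominates f. -/

import Mathlib

noncomputable section

open ZFSet

/-! ### Internal first-order language of set theory and satisfaction in a set `M` -/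

/-- First-order formulas of set theory, with de Bruijn variables. -/
inductive Fml : ℕ → Type
  | mem {n} (i j : Fin n) : Fml n
  | eq {n} (i j : Fin n) : Fml n
  | imp {n} : Fml n → Fml n → Fml n
  | neg {n} : Fml n → Fml n
  | all {n} : Fml (n + 1) → Fml n

namespace Fml

def and {n} (φ ψ : Fml n) : Fml n := neg (imp φ (neg ψ))
def or {n} (φ ψ : Fml n) : Fml n := imp (neg φ) ψ
def iff {n} (φ ψ : Fml n) : Fml n := (imp φ ψ).and (imp ψ φ)
def ex {n} (φ : Fml (n + 1)) : Fml n := neg (all (neg φ))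

/-- Variable renaming. -/
def rename : ∀ {m k : ℕ}, (Fin m → Fin k) → Fml m → Fml k
  | _, _, r, mem i j => mem (r i) (r j)
  | _, _, r, eq i j => eq (r i) (r j)
  | _, _, r, imp φ ψ => imp (rename r φ) (rename r ψ)
  | _, _, r, neg φ => neg (rename r φ)
  | _, _, r, all φ => all (rename (fun i => Fin.cases 0 (fun j => (r j).succ) i) φ)

end Fml

/-- Satisfaction of a formula in the structure `(M, ∈)`, with valuation `v`. -/
def SatM (M : ZFSet) : ∀ {n : ℕ}, Fml n → (Fin n → ZFSet) → Prop
  | _, .mem i j, v => v i ∈ v j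
  | _, .eq i j, v => v i = v j
  | _, .imp φ ψ, v => SatM M φ v → SatM M ψ v
  | _, .neg φ, v => ¬ SatM M φ v
  | _, .all φ, v => ∀ x : ZFSet, x ∈ M → SatM M φ (Fin.cons x v)

/-- Satisfaction for all valuations into `M`. -/
def SatAll (M : ZFSet) {n : ℕ} (φ : Fml n) : Prop :=
  ∀ v : Fin n → ZFSet, (∀ i, v i ∈ M) → SatM M φ v

/-! The axioms of ZFC. -/

def axExt : Fml 2 := .imp (.all (.iff (.mem 0 1) (.mem 0 2))) (.eq 0 1)
def axPair : Fml 2 := .ex (.and (.mem 1 0) (.mem 2 0))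
def axUnion : Fml 1 := .ex (.all (.all (.imp (.and (.mem 0 1) (.mem 1 3)) (.mem 0 2))))
def axPower : Fml 1 := .ex (.all (.imp (.all (.imp (.mem 0 1) (.mem 0 3))) (.mem 0 1)))
def axInf : Fml 0 :=
  .ex (.and (.ex (.and (.mem 0 1) (.all (.neg (.mem 0 1)))))
    (.all (.imp (.mem 0 1)
      (.ex (.and (.mem 0 2) (.and (.mem 1 0)
        (.all (.iff (.mem 0 1) (.or (.mem 0 2) (.eq 0 2))))))))))
def axFound : Fml 1 :=
  .imp (.ex (.mem 0 1)) (.ex (.and (.mem 0 1) (.all (.imp (.mem 0 1) (.neg (.mem 0 2))))))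
def axChoice : Fml 1 :=
  .imp
    (.and (.all (.imp (.mem 0 1) (.ex (.mem 0 1))))
      (.all (.imp (.mem 0 1) (.all (.imp (.mem 0 2)
        (.imp (.neg (.eq 1 0)) (.neg (.ex (.and (.mem 0 2) (.mem 0 1))))))))))
    (.ex (.all (.imp (.mem 0 2) (.ex (.and (.mem 0 1) (.and (.mem 0 2)
      (.all (.imp (.and (.mem 0 2) (.mem 0 3)) (.eq 0 1)))))))))

/-- Separation axiom for the formula `φ(x, p₁, …, pₙ)`. -/
def axSep {n : ℕ} (φ : Fml (n + 1)) : Fml (n + 1) :=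
  .ex (.all (.iff (.mem 0 1) (.and (.mem 0 2)
    (φ.rename (fun i => Fin.cases 0 (fun j => j.succ.succ.succ) i)))))

/-- Collection axiom for the formula `φ(x, y, p₁, …, pₙ)`. -/
def axColl {n : ℕ} (φ : Fml (n + 2)) : Fml (n + 1) :=
  .imp
    (.all (.imp (.mem 0 1)
      (.ex (φ.rename (fun i =>
        Fin.cases 1 (fun i' => Fin.cases 0 (fun j => j.succ.succ.succ) i') i)))))
    (.ex (.all (.imp (.mem 0 2) (.ex (.and (.mem 0 2)
      (φ.rename (fun i =>
        Fin.cases 1 (fun i' => Fin.cases 0 (fun j => j.succ.succ.succ.succ) i') i)))))))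

/-- `M` is a transitive model of ZFC (with the collection scheme). -/
def IsTransModelZFC (M : ZFSet) : Prop :=
  M.IsTransitive ∧ SatAll M axExt ∧ SatAll M axPair ∧ SatAll M axUnion ∧
    SatAll M axPower ∧ SatAll M axInf ∧ SatAll M axFound ∧ SatAll M axChoice ∧
    (∀ (n : ℕ) (φ : Fml (n + 1)), SatAll M (axSep φ)) ∧
    (∀ (n : ℕ) (φ : Fml (n + 2)), SatAll M (axColl φ))

/-! ### Coding countable objects as elements of `ZFSet` -/

/-- The von Neumann natural numbers. -/
def natZF : ℕ → ZFSet
  | 0 => ∅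
  | n + 1 => insert (natZF n) (natZF n)

/-- The code of a function `ℕ → ℕ` as a set of Kuratowski pairs. -/
def funZF (f : ℕ → ℕ) : ZFSet :=
  ZFSet.range fun n : ℕ => ZFSet.pair (natZF n) (natZF (f n))

/-- The code of a finite sequence of naturals. -/
def listZF (l : List ℕ) : ZFSet :=
  ZFSet.range fun i : Fin l.length => ZFSet.pair (natZF i) (natZF (l.get i))

/-- The code of a set of finite sequences of naturals. -/
def listSetZF (D : Set (List ℕ)) : ZFSet :=
  ZFSet.range fun l : D => listZF l.1

end

noncomputable section

open Filter

/-- The code of a subset of a coded poset. -/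
def subsetZF {P : Type} (cP : P → ZFSet) (D : Set P) : ZFSet :=
  ZFSet.range fun a : D => cP a.1

/-- The code of the order relation of a coded poset. -/
def ordZF {P : Type} [Preorder P] (cP : P → ZFSet) : ZFSet :=
  ZFSet.range fun q : {q : P × P // q.1 ≤ q.2} => ZFSet.pair (cP q.1.1) (cP q.1.2)

/-- The code of a name for an element of `ω^ω`, presented by its deciding relation
`Dec a n m` (read: the condition `a` decides that the value at `n` is `m`). -/
def decZF {P : Type} (cP : P → ZFSet) (Dec : P → ℕ → ℕ → Prop) : ZFSet :=
  ZFSet.range fun w : {w : P × ℕ × ℕ // Dec w.1 w.2.1 w.2.2} =>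
    ZFSet.pair (cP w.1.1) (ZFSet.pair (natZF w.1.2.1) (natZF w.1.2.2))

/-- `G` is an `M`-generic filter on the coded poset `P`. -/
def IsGenericFilter {P : Type} [Preorder P] (M : ZFSet) (cP : P → ZFSet)
    (G : Set P) : Prop :=
  (∀ a ∈ G, ∀ b : P, a ≤ b → b ∈ G) ∧
    (∀ a ∈ G, ∀ b ∈ G, ∃ c ∈ G, c ≤ a ∧ c ≤ b) ∧
    ∀ D : Set P, subsetZF cP D ∈ M → (∀ a : P, ∃ b ∈ D, b ≤ a) → (G ∩ D).Nonempty
section Aux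

open ZFSet

/-! satisfaction helpers -/

theorem satM_rename {M : ZFSet} : ∀ {m k : ℕ} (r : Fin m → Fin k) (φ : Fml m)
    (v : Fin k → ZFSet), SatM M (φ.rename r) v ↔ SatM M φ (v ∘ r)
  | _, _, r, .mem i j, v => Iff.rfl
  | _, _, r, .eq i j, v => Iff.rfl
  | _, _, r, .imp φ ψ, v => by
      simp only [Fml.rename, SatM]
      rw [satM_rename r φ v, satM_rename r ψ v]
  | _, _, r, .neg φ, v => by
      simp only [Fml.rename, SatM]
      rw [satM_rename r φ v]
  | _, _, r, .all φ, v => by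
      simp only [Fml.rename, SatM]
      refine forall₂_congr fun x hx => ?_
      rw [satM_rename _ φ _]
      have : (Fin.cons x v ∘ fun i => Fin.cases 0 (fun j => (r j).succ) i)
          = Fin.cons x (v ∘ r) := by
        funext i
        refine Fin.cases ?_ (fun j => ?_) i <;> simp
      rw [this]

theorem satM_mem {M : ZFSet} {n} {i j : Fin n} {v} : SatM M (.mem i j) v ↔ v i ∈ v j := Iff.rfl
theorem satM_eq {M : ZFSet} {n} {i j : Fin n} {v} : SatM M (.eq i j) v ↔ v i = v j := Iff.rfl
theorem satM_imp {M : ZFSet} {n} {φ ψ : Fml n} {v} :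
    SatM M (.imp φ ψ) v ↔ (SatM M φ v → SatM M ψ v) := Iff.rfl
theorem satM_neg {M : ZFSet} {n} {φ : Fml n} {v} : SatM M (.neg φ) v ↔ ¬ SatM M φ v := Iff.rfl
theorem satM_all {M : ZFSet} {n} {φ : Fml (n+1)} {v} :
    SatM M (.all φ) v ↔ ∀ x ∈ M, SatM M φ (Fin.cons x v) := Iff.rfl
theorem satM_and {M : ZFSet} {n} {φ ψ : Fml n} {v} :
    SatM M (φ.and ψ) v ↔ SatM M φ v ∧ SatM M ψ v := by
  unfold Fml.and; rw [satM_neg, satM_imp, satM_neg]; tauto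
theorem satM_or {M : ZFSet} {n} {φ ψ : Fml n} {v} :
    SatM M (φ.or ψ) v ↔ SatM M φ v ∨ SatM M ψ v := by
  unfold Fml.or; rw [satM_imp, satM_neg]; tauto
theorem satM_iff {M : ZFSet} {n} {φ ψ : Fml n} {v} :
    SatM M (φ.iff ψ) v ↔ (SatM M φ v ↔ SatM M ψ v) := by
  unfold Fml.iff; rw [satM_and, satM_imp, satM_imp]; tauto
theorem satM_ex {M : ZFSet} {n} {φ : Fml (n+1)} {v} :
    SatM M (.ex φ) v ↔ ∃ x ∈ M, SatM M φ (Fin.cons x v) := by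
  unfold Fml.ex; rw [satM_neg, satM_all]; push_neg
  exact exists_congr fun x => by rw [satM_neg]; tauto

/-! Fin.cons at numeral indices -/

theorem fin_one_succ {n : ℕ} : (1 : Fin (n+2)) = (0 : Fin (n+1)).succ := by ext; simp
theorem fin_two_succ {n : ℕ} : (2 : Fin (n+3)) = (1 : Fin (n+2)).succ := by
  ext
  have : (2 : Fin (n+3)).val = 2 % (n+3) := rfl
  rw [this, Nat.mod_eq_of_lt (by omega)]
  simp [Nat.mod_eq_of_lt (show 2 < n + 3 by omega)]
theorem cons_one {n : ℕ} (x : ZFSet) (v : Fin (n+1) → ZFSet) :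
    (Fin.cons x v : Fin (n+2) → ZFSet) 1 = v 0 := by rw [fin_one_succ, Fin.cons_succ]
theorem cons_two {n : ℕ} (x : ZFSet) (v : Fin (n+2) → ZFSet) :
    (Fin.cons x v : Fin (n+3) → ZFSet) 2 = v 1 := by rw [fin_two_succ, Fin.cons_succ]

/-! natZF lemmas -/

theorem mem_natZF {z : ZFSet} {n : ℕ} : z ∈ natZF n ↔ ∃ m < n, z = natZF m := by
  induction n with
  | zero => simp [natZF]
  | succ n ih =>
    simp only [natZF, mem_insert_iff, ih]
    constructor
    · rintro (rfl | ⟨m, hm, rfl⟩)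
      · exact ⟨n, Nat.lt_succ_self n, rfl⟩
      · exact ⟨m, hm.trans (Nat.lt_succ_self n), rfl⟩
    · rintro ⟨m, hm, rfl⟩
      rcases Nat.lt_succ_iff_lt_or_eq.1 hm with h | rfl
      · exact Or.inr ⟨m, h, rfl⟩
      · exact Or.inl rfl

theorem natZF_mem_natZF {m n : ℕ} : natZF m ∈ natZF n ↔ m < n := by
  constructor
  · intro h
    by_contra hle
    push_neg at hle
    have hsub : ∀ {a b : ℕ}, a ≤ b → natZF a = natZF b ∨ natZF a ∈ natZF b := by
      intro a b hab
      induction hab with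
      | refl => exact Or.inl rfl
      | step h ih =>
        rcases ih with h' | h'
        · exact Or.inr (by rw [h']; exact mem_insert _ _)
        · exact Or.inr (mem_insert_of_mem _ h')
    rcases hsub hle with h' | h'
    · rw [h'] at h; exact ZFSet.mem_irrefl _ h
    · exact ZFSet.mem_asymm h h'
  · intro h
    exact mem_natZF.2 ⟨m, h, rfl⟩

theorem natZF_injective : Function.Injective natZF := by
  intro m n h
  by_contra hne
  rcases Nat.lt_or_ge m n with hl | hg
  · have := natZF_mem_natZF.2 hl; rw [h] at this; exact ZFSet.mem_irrefl _ this
  · rcases Nat.lt_of_le_of_ne hg (Ne.symm hne) with hl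
    have := natZF_mem_natZF.2 hl; rw [h] at this; exact ZFSet.mem_irrefl _ this

theorem natZF_le_iff {m n : ℕ} : natZF m ∈ natZF n ∨ natZF m = natZF n ↔ m ≤ n := by
  rw [natZF_mem_natZF, natZF_injective.eq_iff]
  omega

/-! transitive model toolkit -/

theorem tmTrans {M : ZFSet} (hM : IsTransModelZFC M) {x y : ZFSet}
    (hx : x ∈ M) (hy : y ∈ x) : y ∈ M := hM.1 x hx hy

/-- Separation in usable form. -/
theorem tmSep {M : ZFSet} (hM : IsTransModelZFC M) {n : ℕ} (φ : Fml (n + 1)) {A : ZFSet}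
    (hA : A ∈ M) {pv : Fin n → ZFSet} (hpv : ∀ i, pv i ∈ M) :
    ∃ S ∈ M, ∀ x, x ∈ S ↔ x ∈ A ∧ SatM M φ (Fin.cons x pv) := by
  have hsep := hM.2.2.2.2.2.2.2.2.1 n φ (Fin.cons A pv) (fun i => Fin.cases hA hpv i)
  rw [axSep, satM_ex] at hsep
  obtain ⟨S, hSM, hS⟩ := hsep
  rw [satM_all] at hS
  refine ⟨S, hSM, fun x => ?_⟩
  have key : ∀ x ∈ M, (x ∈ S ↔ x ∈ A ∧ SatM M φ (Fin.cons x pv)) := by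
    intro x hx
    have h := hS x hx
    rw [satM_iff, satM_mem, satM_and, satM_mem, satM_rename] at h
    have e0 : (Fin.cons x (Fin.cons S (Fin.cons A pv)) : Fin (n+3) → ZFSet) 0 = x :=
      Fin.cons_zero _ _
    have e1 : (Fin.cons x (Fin.cons S (Fin.cons A pv)) : Fin (n+3) → ZFSet) 1 = S := by
      rw [cons_one, Fin.cons_zero]
    have e2 : (Fin.cons x (Fin.cons S (Fin.cons A pv)) : Fin (n+3) → ZFSet) 2 = A := by
      rw [cons_two, cons_one, Fin.cons_zero]
    rw [e0, e1, e2] at h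
    have ev : (Fin.cons x (Fin.cons S (Fin.cons A pv)) ∘
        fun i : Fin (n+1) => Fin.cases 0 (fun j => j.succ.succ.succ) i) = Fin.cons x pv := by
      funext i
      refine Fin.cases ?_ (fun j => ?_) i
      · simp
      · simp [Fin.cons_succ]
    rw [ev] at h
    exact h
  constructor
  · intro hxS
    exact (key x (tmTrans hM hSM hxS)).1 hxS
  · rintro ⟨hxA, hφ⟩
    exact (key x (tmTrans hM hA hxA)).2 ⟨hxA, hφ⟩

end Aux
open ZFSet in
theorem fin_three_succ {n : ℕ} : (3 : Fin (n+4)) = (2 : Fin (n+3)).succ := by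
  ext
  have h1 : (3 : Fin (n+4)).val = 3 % (n+4) := rfl
  have h2 : (2 : Fin (n+3)).val = 2 % (n+3) := rfl
  rw [h1, Nat.mod_eq_of_lt (by omega), Fin.val_succ, h2, Nat.mod_eq_of_lt (by omega)]

theorem cons_three {n : ℕ} (x : ZFSet) (v : Fin (n+3) → ZFSet) :
    (Fin.cons x v : Fin (n+4) → ZFSet) 3 = v 2 := by rw [fin_three_succ, Fin.cons_succ]

section Aux2

open ZFSet

theorem tmUpair {M : ZFSet} (hM : IsTransModelZFC M) {a b : ZFSet}
    (ha : a ∈ M) (hb : b ∈ M) : ({a, b} : ZFSet) ∈ M := by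
  have hvM : ∀ i, (Fin.cons a (Fin.cons b Fin.elim0) : Fin 2 → ZFSet) i ∈ M := fun i => by
    refine Fin.cases ha (fun j => ?_) i
    refine Fin.cases hb (fun k => k.elim0) j
  have hpair := hM.2.2.1 _ hvM
  simp only [axPair, satM_ex, satM_and, satM_mem, Fin.cons_zero, cons_one, cons_two] at hpair
  obtain ⟨c, hcM, hac, hbc⟩ := hpair
  obtain ⟨S, hSM, hS⟩ := tmSep hM (n := 2) ((Fml.eq 0 1).or (.eq 0 2)) hcM hvM
  have : S = {a, b} := by
    apply ZFSet.ext
    intro z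
    rw [hS z]
    simp only [satM_or, satM_eq, Fin.cons_zero, cons_one, cons_two, mem_pair]
    constructor
    · rintro ⟨_, h⟩; exact h
    · rintro (rfl | rfl)
      · exact ⟨hac, Or.inl rfl⟩
      · exact ⟨hbc, Or.inr rfl⟩
  rw [← this]; exact hSM

theorem tmSingleton {M : ZFSet} (hM : IsTransModelZFC M) {a : ZFSet} (ha : a ∈ M) :
    ({a} : ZFSet) ∈ M := by
  have := tmUpair hM ha ha
  rwa [ZFSet.pair_eq_singleton] at this

theorem tmPair {M : ZFSet} (hM : IsTransModelZFC M) {a b : ZFSet}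
    (ha : a ∈ M) (hb : b ∈ M) : ZFSet.pair a b ∈ M :=
  tmUpair hM (tmSingleton hM ha) (tmUpair hM ha hb)

/-- There is a set in `M` containing all von Neumann naturals. -/
theorem tmNats {M : ZFSet} (hM : IsTransModelZFC M) :
    ∃ w ∈ M, ∀ n : ℕ, natZF n ∈ w := by
  have hinf := hM.2.2.2.2.2.1 Fin.elim0 (fun i => i.elim0)
  simp only [axInf, satM_ex, satM_and, satM_mem, satM_all, satM_neg, satM_imp, satM_iff,
    satM_or, satM_eq, Fin.cons_zero, Fin.cons_succ, cons_one, cons_two] at hinf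
  obtain ⟨w, hwM, ⟨z, hzM, hzw, hzE⟩, hind⟩ := hinf
  refine ⟨w, hwM, ?_⟩
  have hz0 : z = ∅ := by
    rw [ZFSet.eq_empty]
    intro u hu
    exact hzE u (tmTrans hM hzM hu) hu
  intro n
  induction n with
  | zero => show (∅ : ZFSet) ∈ w; rw [← hz0]; exact hzw
  | succ n ih =>
    have hnM : natZF n ∈ M := tmTrans hM hwM ih
    obtain ⟨s, hsM, hsw, hns, hsE⟩ := hind (natZF n) hnM ih
    have : s = natZF (n+1) := by
      apply ZFSet.ext
      intro u
      show u ∈ s ↔ u ∈ insert (natZF n) (natZF n)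
      rw [mem_insert_iff]
      constructor
      · intro hu
        rcases (hsE u (tmTrans hM hsM hu)).1 hu with h | h
        · exact Or.inr h
        · exact Or.inl h
      · rintro (rfl | hu)
        · exact (hsE _ hnM).2 (Or.inr rfl)
        · exact (hsE u (tmTrans hM hnM hu)).2 (Or.inl hu)
    rw [← this]; exact hsw

end Aux2
/-! ### The formula defining the natural numbers, and `ω ∩ M` -/

/-- `x` is a transitive set. -/
def transF {n : ℕ} (x : Fin n) : Fml n :=
  .all (.imp (.mem 0 x.succ) (.all (.imp (.mem 0 1) (.mem 0 x.succ.succ))))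

/-- `x = u ∪ {u}`. -/
def succEqF {n : ℕ} (x u : Fin n) : Fml n :=
  .all (.iff (.mem 0 x.succ) (Fml.or (.mem 0 u.succ) (.eq 0 u.succ)))

/-- `x` is empty or a successor. -/
def succishF {n : ℕ} (x : Fin n) : Fml n :=
  Fml.or (.all (.neg (.mem 0 x.succ))) (.ex (Fml.and (.mem 0 x.succ) (succEqF x.succ 0)))

/-- `x` is a natural number. -/
def natF : Fml 1 :=
  Fml.and (transF 0) (Fml.and (.all (.imp (.mem 0 1) (transF 0)))
    (Fml.and (succishF 0) (.all (.imp (.mem 0 1) (succishF 0)))))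

section Aux3

open ZFSet

theorem zfTrans {M : ZFSet} (hM : IsTransModelZFC M) : M.IsTransitive := hM.1

theorem sat_transF {M : ZFSet} (hM : IsTransModelZFC M) {n : ℕ} {v : Fin n → ZFSet}
    (x : Fin n) (hv : ∀ i, v i ∈ M) :
    SatM M (transF x) v ↔ (v x).IsTransitive := by
  simp only [transF, satM_all, satM_imp, satM_mem, Fin.cons_succ, Fin.cons_zero, cons_one]
  constructor
  · intro h y hy z hz
    exact h y (tmTrans hM (hv x) hy) hy z (tmTrans hM (tmTrans hM (hv x) hy) hz) hz
  · intro h y _ hy z _ hz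
    exact h y hy hz

theorem sat_succEqF {M : ZFSet} (hM : IsTransModelZFC M) {n : ℕ} {v : Fin n → ZFSet}
    (x u : Fin n) (hv : ∀ i, v i ∈ M) :
    SatM M (succEqF x u) v ↔ v x = insert (v u) (v u) := by
  simp only [succEqF, satM_all, satM_iff, satM_mem, satM_or, satM_eq, Fin.cons_succ,
    Fin.cons_zero]
  constructor
  · intro h
    apply ZFSet.ext
    intro t
    rw [mem_insert_iff]
    constructor
    · intro ht
      rcases (h t (tmTrans hM (hv x) ht)).1 ht with h' | h'
      · exact Or.inr h'
      · exact Or.inl h'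
    · rintro (rfl | ht)
      · exact (h _ (hv u)).2 (Or.inr rfl)
      · exact (h t (tmTrans hM (hv u) ht)).2 (Or.inl ht)
  · intro hEq t _
    rw [hEq, mem_insert_iff]
    constructor
    · rintro (rfl | ht) 
      · exact Or.inr rfl
      · exact Or.inl ht
    · rintro (ht | rfl)
      · exact Or.inr ht
      · exact Or.inl rfl

/-- `z` is empty or a successor. -/
def ZSuccish (z : ZFSet) : Prop := z = ∅ ∨ ∃ u ∈ z, z = insert u u

theorem sat_succishF {M : ZFSet} (hM : IsTransModelZFC M) {n : ℕ} {v : Fin n → ZFSet}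
    (x : Fin n) (hv : ∀ i, v i ∈ M) :
    SatM M (succishF x) v ↔ ZSuccish (v x) := by
  simp only [succishF, satM_or, satM_all, satM_neg, satM_mem, satM_ex, satM_and,
    Fin.cons_succ, Fin.cons_zero]
  unfold ZSuccish
  constructor
  · rintro (h | ⟨u, huM, hux, hu⟩)
    · left
      rw [ZFSet.eq_empty]
      intro t ht
      exact h t (tmTrans hM (hv x) ht) ht
    · right
      refine ⟨u, hux, ?_⟩
      have := (sat_succEqF hM (x.succ) (0 : Fin (n+1))
        (v := Fin.cons u v) (fun i => Fin.cases huM hv i)).1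
      simp only [Fin.cons_succ, Fin.cons_zero] at this
      exact this hu
  · rintro (h | ⟨u, hux, hu⟩)
    · left; intro t _ ht; rw [h] at ht; exact notMem_empty t ht
    · right
      have huM : u ∈ M := tmTrans hM (hv x) hux
      refine ⟨u, huM, hux, ?_⟩
      have := (sat_succEqF hM (x.succ) (0 : Fin (n+1))
        (v := Fin.cons u v) (fun i => Fin.cases huM hv i)).2
      simp only [Fin.cons_succ, Fin.cons_zero] at this
      exact this hu

theorem natZF_isTransitive (n : ℕ) : (natZF n).IsTransitive := by
  intro y hy z hz
  obtain ⟨m, hm, rfl⟩ := mem_natZF.1 hy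
  obtain ⟨k, hk, rfl⟩ := mem_natZF.1 hz
  exact natZF_mem_natZF.2 (hk.trans hm)

theorem natZF_succish (n : ℕ) : ZSuccish (natZF n) := by
  cases n with
  | zero => exact Or.inl rfl
  | succ n => exact Or.inr ⟨natZF n, by rw [natZF]; exact mem_insert _ _, rfl⟩

/-- Characterisation of the von Neumann naturals. -/
theorem natChar {x : ZFSet} (h1 : x.IsTransitive) (h2 : ∀ y ∈ x, IsTransitive y)
    (h3 : ZSuccish x) (h4 : ∀ y ∈ x, ZSuccish y) : ∃ n, x = natZF n := by
  induction x using ZFSet.inductionOn with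
  | _ x IH =>
    rcases h3 with rfl | ⟨u, hu, hx⟩
    · exact ⟨0, rfl⟩
    · obtain ⟨n, hn⟩ := IH u hu (h2 u hu)
        (fun y hy => h2 y (h1 u hu hy)) (h4 u hu) (fun y hy => h4 y (h1 u hu hy))
      exact ⟨n + 1, by rw [hx, hn]; rfl⟩

/-- The set of natural numbers of `M`. -/
theorem tmOmega {M : ZFSet} (hM : IsTransModelZFC M) :
    ∃ Ω ∈ M, ∀ x, x ∈ Ω ↔ ∃ n, x = natZF n := by
  obtain ⟨w, hwM, hw⟩ := tmNats hM
  obtain ⟨S, hSM, hS⟩ := tmSep hM (n := 0) natF hwM (pv := Fin.elim0) (fun i => i.elim0)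
  refine ⟨S, hSM, fun x => ?_⟩
  rw [hS x]
  constructor
  · rintro ⟨hxw, hsat⟩
    have hxM : x ∈ M := tmTrans hM hwM hxw
    have hv : ∀ i, (Fin.cons x Fin.elim0 : Fin 1 → ZFSet) i ∈ M := fun i => by
      refine Fin.cases hxM (fun j => j.elim0) i
    rw [natF, satM_and, satM_and, satM_and, satM_all] at hsat
    obtain ⟨ht, het, hs, hes⟩ := hsat
    rw [sat_transF hM _ hv] at ht
    rw [sat_succishF hM _ hv] at hs
    simp only [Fin.cons_zero] at ht hs
    refine natChar ht ?_ hs ?_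
    · intro y hy
      have hyM := tmTrans hM hxM hy
      have := het y hyM
      simp only [satM_imp, satM_mem, Fin.cons_zero, cons_one] at this
      have := this hy
      rw [sat_transF hM _ (fun i => Fin.cases hyM hv i)] at this
      simpa using this
    · intro y hy
      have hyM := tmTrans hM hxM hy
      have := hes y hyM
      simp only [satM_imp, satM_mem, Fin.cons_zero, cons_one] at this
      have := this hy
      rw [sat_succishF hM _ (fun i => Fin.cases hyM hv i)] at this
      simpa using this
  · rintro ⟨n, rfl⟩
    refine ⟨hw n, ?_⟩
    have hnM : natZF n ∈ M := tmTrans hM hwM (hw n)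
    have hv : ∀ i, (Fin.cons (natZF n) Fin.elim0 : Fin 1 → ZFSet) i ∈ M := fun i => by
      refine Fin.cases hnM (fun j => j.elim0) i
    rw [natF, satM_and, satM_and, satM_and, satM_all]
    refine ⟨?_, ?_, ?_, ?_⟩
    · rw [sat_transF hM _ hv]; simpa using natZF_isTransitive n
    · intro y hyM
      simp only [satM_imp, satM_mem, Fin.cons_zero, cons_one]
      intro hy
      rw [sat_transF hM _ (fun i => Fin.cases hyM hv i)]
      simp only [Fin.cons_zero]
      obtain ⟨m, _, rfl⟩ := mem_natZF.1 hy
      exact natZF_isTransitive m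
    · rw [sat_succishF hM _ hv]; simpa using natZF_succish n
    · intro y hyM
      simp only [satM_imp, satM_mem, Fin.cons_zero, cons_one]
      intro hy
      rw [sat_succishF hM _ (fun i => Fin.cases hyM hv i)]
      simp only [Fin.cons_zero]
      obtain ⟨m, _, rfl⟩ := mem_natZF.1 hy
      exact natZF_succish m
    
/-- A superset of the union. -/
theorem tmUnionSup {M : ZFSet} (hM : IsTransModelZFC M) {A : ZFSet} (hA : A ∈ M) :
    ∃ U ∈ M, ∀ x y : ZFSet, x ∈ y → y ∈ A → x ∈ U := by
  have h := hM.2.2.2.1 (Fin.cons A Fin.elim0) (fun i => Fin.cases hA (fun j => j.elim0) i)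
  simp only [axUnion, satM_ex, satM_all, satM_imp, satM_and, satM_mem, Fin.cons_zero,
    Fin.cons_succ, cons_one, cons_two, cons_three] at h
  obtain ⟨U, hUM, hU⟩ := h
  refine ⟨U, hUM, fun x y hxy hyA => ?_⟩
  have hyM : y ∈ M := tmTrans hM hA hyA
  exact hU y hyM x (tmTrans hM hyM hxy) ⟨hxy, hyA⟩

/-- A superset of the powerset. -/
theorem tmPowSup {M : ZFSet} (hM : IsTransModelZFC M) {A : ZFSet} (hA : A ∈ M) :
    ∃ C ∈ M, ∀ x ∈ M, x ⊆ A → x ∈ C := by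
  have h := hM.2.2.2.2.1 (Fin.cons A Fin.elim0) (fun i => Fin.cases hA (fun j => j.elim0) i)
  simp only [axPower, satM_ex, satM_all, satM_imp, satM_mem, Fin.cons_zero,
    Fin.cons_succ, cons_one, cons_two, cons_three] at h
  obtain ⟨C, hCM, hC⟩ := h
  refine ⟨C, hCM, fun x hxM hxA => ?_⟩
  exact hC x hxM (fun t _ ht => hxA ht)

end Aux3
/-! ### Internal formulas for pairs and the deciding relation -/

/-- `u = {a}`. -/
def singF {n : ℕ} (u a : Fin n) : Fml n := .all (.iff (.mem 0 u.succ) (.eq 0 a.succ))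
/-- `u = {a, b}`. -/
def duoF {n : ℕ} (u a b : Fin n) : Fml n :=
  .all (.iff (.mem 0 u.succ) (Fml.or (.eq 0 a.succ) (.eq 0 b.succ)))
/-- `z = ⟨a, b⟩` (Kuratowski). -/
def isPairF {n : ℕ} (z a b : Fin n) : Fml n :=
  .all (.iff (.mem 0 z.succ) (Fml.or (singF 0 a.succ) (duoF 0 a.succ b.succ)))
/-- `k ≤ l` for von Neumann naturals. -/
def leNatF {n : ℕ} (k l : Fin n) : Fml n := Fml.or (.mem k l) (.eq k l)
/-- `w = ⟨b, ⟨k, m⟩⟩`. -/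
def isTripleF {n : ℕ} (w b k m : Fin n) : Fml n :=
  .ex (Fml.and (isPairF w.succ b.succ 0) (isPairF 0 k.succ m.succ))
/-- `⟨b, c⟩ ∈ O`. -/
def inOrdF {n : ℕ} (b c O : Fin n) : Fml n :=
  .ex (Fml.and (.mem 0 O.succ) (isPairF 0 b.succ c.succ))
/-- every value decided at a coordinate `≤ nn` by a condition `≤ c` is `≤ K`. -/
def bndF {n : ℕ} (nn K D O c : Fin n) : Fml n :=
  .all (.imp (.mem 0 D.succ) (.all (.all (.all (
    .imp (isTripleF 3 2 1 0)
      (.imp (inOrdF 2 (c.succ.succ.succ.succ) (O.succ.succ.succ.succ))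
        (.imp (leNatF 1 (nn.succ.succ.succ.succ)) (leNatF 0 (K.succ.succ.succ.succ)))))))))
/-- `z` is a pair `⟨n, K⟩` with `K` the least bound as in `bndF`.
Context: `z = 0, ω = 1, D = 2, O = 3, c = 4`. -/
def graphF : Fml 5 :=
  .ex (Fml.and (.mem 0 2)
    (.ex (Fml.and (.mem 0 3)
      (Fml.and (isPairF 2 1 0)
        (Fml.and (bndF 1 0 4 5 6)
          (.all (.imp (.mem 0 1) (.neg (bndF 2 0 5 6 7)))))))))

section Aux4

open ZFSet

theorem natZF_mem_M {M : ZFSet} (hM : IsTransModelZFC M) (n : ℕ) : natZF n ∈ M := by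
  obtain ⟨w, hwM, hw⟩ := tmNats hM
  exact tmTrans hM hwM (hw n)

theorem sat_singF {M : ZFSet} (hM : IsTransModelZFC M) {n : ℕ} {v : Fin n → ZFSet}
    (u a : Fin n) (hv : ∀ i, v i ∈ M) :
    SatM M (singF u a) v ↔ v u = {v a} := by
  simp only [singF, satM_all, satM_iff, satM_mem, satM_eq, Fin.cons_succ, Fin.cons_zero]
  constructor
  · intro h
    apply ZFSet.ext
    intro t
    rw [mem_singleton]
    exact ⟨fun ht => (h t (tmTrans hM (hv u) ht)).1 ht,
      fun ht => ht ▸ (h _ (hv a)).2 rfl⟩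
  · intro h t _
    rw [h, mem_singleton]

theorem sat_duoF {M : ZFSet} (hM : IsTransModelZFC M) {n : ℕ} {v : Fin n → ZFSet}
    (u a b : Fin n) (hv : ∀ i, v i ∈ M) :
    SatM M (duoF u a b) v ↔ v u = {v a, v b} := by
  simp only [duoF, satM_all, satM_iff, satM_mem, satM_or, satM_eq, Fin.cons_succ,
    Fin.cons_zero]
  constructor
  · intro h
    apply ZFSet.ext
    intro t
    rw [mem_pair]
    constructor
    · intro ht; exact (h t (tmTrans hM (hv u) ht)).1 ht
    · rintro (rfl | rfl)
      · exact (h _ (hv a)).2 (Or.inl rfl)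
      · exact (h _ (hv b)).2 (Or.inr rfl)
  · intro h t _
    rw [h, mem_pair]

theorem sat_isPairF {M : ZFSet} (hM : IsTransModelZFC M) {n : ℕ} {v : Fin n → ZFSet}
    (z a b : Fin n) (hv : ∀ i, v i ∈ M) :
    SatM M (isPairF z a b) v ↔ v z = ZFSet.pair (v a) (v b) := by
  simp only [isPairF, satM_all, satM_iff, satM_mem, satM_or, Fin.cons_succ, Fin.cons_zero]
  have hsd : ∀ t (ht : t ∈ M),
      (SatM M (singF (0 : Fin (n+1)) a.succ) (Fin.cons t v) ↔ t = {v a}) ∧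
      (SatM M (duoF (0 : Fin (n+1)) a.succ b.succ) (Fin.cons t v) ↔ t = {v a, v b}) := by
    intro t ht
    constructor
    · rw [sat_singF hM _ _ (fun i => Fin.cases ht hv i)]
      simp [Fin.cons_succ]
    · rw [sat_duoF hM _ _ _ (fun i => Fin.cases ht hv i)]
      simp [Fin.cons_succ]
  constructor
  · intro h
    apply ZFSet.ext
    intro t
    rw [ZFSet.pair, mem_pair]
    constructor
    · intro ht
      have htM := tmTrans hM (hv z) ht
      rcases (h t htM).1 ht with h' | h'
      · exact Or.inl ((hsd t htM).1.1 h')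
      · exact Or.inr ((hsd t htM).2.1 h')
    · rintro (rfl | rfl)
      · have htM : ({v a} : ZFSet) ∈ M := tmSingleton hM (hv a)
        exact (h _ htM).2 (Or.inl ((hsd _ htM).1.2 rfl))
      · have htM : ({v a, v b} : ZFSet) ∈ M := tmUpair hM (hv a) (hv b)
        exact (h _ htM).2 (Or.inr ((hsd _ htM).2.2 rfl))
  · intro h t htM
    rw [h, ZFSet.pair, mem_pair, (hsd t htM).1, (hsd t htM).2]

theorem sat_leNatF {M : ZFSet} {n : ℕ} {v : Fin n → ZFSet} {k l : Fin n} {k0 l0 : ℕ}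
    (hk : v k = natZF k0) (hl : v l = natZF l0) :
    SatM M (leNatF k l) v ↔ k0 ≤ l0 := by
  simp only [leNatF, satM_or, satM_mem, satM_eq, hk, hl]
  exact natZF_le_iff

theorem sat_isTripleF {M : ZFSet} (hM : IsTransModelZFC M) {n : ℕ} {v : Fin n → ZFSet}
    (w b k m : Fin n) (hv : ∀ i, v i ∈ M) :
    SatM M (isTripleF w b k m) v ↔ v w = ZFSet.pair (v b) (ZFSet.pair (v k) (v m)) := by
  simp only [isTripleF, satM_ex, satM_and]
  constructor
  · rintro ⟨u, huM, h1, h2⟩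
    rw [sat_isPairF hM _ _ _ (fun i => Fin.cases huM hv i)] at h1 h2
    simp only [Fin.cons_succ, Fin.cons_zero] at h1 h2
    rw [h1, h2]
  · intro h
    have huM : ZFSet.pair (v k) (v m) ∈ M := tmPair hM (hv k) (hv m)
    refine ⟨_, huM, ?_, ?_⟩
    · rw [sat_isPairF hM _ _ _ (fun i => Fin.cases huM hv i)]
      simp only [Fin.cons_succ, Fin.cons_zero]
      exact h
    · rw [sat_isPairF hM _ _ _ (fun i => Fin.cases huM hv i)]
      simp only [Fin.cons_succ, Fin.cons_zero]

end Aux4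
section Aux5

open ZFSet

variable {P : Type} [Preorder P] {cP : P → ZFSet} {Dec : P → ℕ → ℕ → Prop}

theorem mem_ordZF {x : ZFSet} :
    x ∈ ordZF cP ↔ ∃ q₁ q₂ : P, q₁ ≤ q₂ ∧ x = ZFSet.pair (cP q₁) (cP q₂) := by
  rw [ordZF, ZFSet.mem_range]
  constructor
  · rintro ⟨⟨⟨q₁, q₂⟩, h⟩, rfl⟩
    exact ⟨q₁, q₂, h, rfl⟩
  · rintro ⟨q₁, q₂, h, rfl⟩
    exact ⟨⟨⟨q₁, q₂⟩, h⟩, rfl⟩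

theorem mem_decZF {x : ZFSet} :
    x ∈ decZF cP Dec ↔ ∃ b k m, Dec b k m ∧
      x = ZFSet.pair (cP b) (ZFSet.pair (natZF k) (natZF m)) := by
  rw [decZF, ZFSet.mem_range]
  constructor
  · rintro ⟨⟨⟨b, k, m⟩, h⟩, rfl⟩
    exact ⟨b, k, m, h, rfl⟩
  · rintro ⟨b, k, m, h, rfl⟩
    exact ⟨⟨⟨b, k, m⟩, h⟩, rfl⟩

theorem mem_funZF {x : ZFSet} {g : ℕ → ℕ} :
    x ∈ funZF g ↔ ∃ n, x = ZFSet.pair (natZF n) (natZF (g n)) := by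
  rw [funZF, ZFSet.mem_range]
  constructor
  · rintro ⟨n, rfl⟩; exact ⟨n, rfl⟩
  · rintro ⟨n, rfl⟩; exact ⟨n, rfl⟩

theorem mem_subsetZF {x : ZFSet} {D : Set P} :
    x ∈ subsetZF cP D ↔ ∃ a ∈ D, cP a = x := by
  rw [subsetZF, ZFSet.mem_range]
  constructor
  · rintro ⟨⟨a, ha⟩, rfl⟩; exact ⟨a, ha, rfl⟩
  · rintro ⟨a, ha, rfl⟩; exact ⟨⟨a, ha⟩, rfl⟩

theorem cP_mem_M {M : ZFSet} (hM : IsTransModelZFC M) (hPM : ZFSet.range cP ∈ M) (b : P) :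
    cP b ∈ M :=
  tmTrans hM hPM (ZFSet.mem_range.2 ⟨b, rfl⟩)

theorem sat_inOrdF {M : ZFSet} (hM : IsTransModelZFC M) (hcP : Function.Injective cP)
    (hOM : ordZF cP ∈ M) {n : ℕ} {v : Fin n → ZFSet} {b c O : Fin n}
    {b₀ a₀ : P} (hb : v b = cP b₀) (hc : v c = cP a₀) (hO : v O = ordZF cP)
    (hv : ∀ i, v i ∈ M) :
    SatM M (inOrdF b c O) v ↔ b₀ ≤ a₀ := by
  simp only [inOrdF, satM_ex, satM_and, satM_mem, Fin.cons_succ, Fin.cons_zero, hO]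
  constructor
  · rintro ⟨w, hwM, hwO, hw⟩
    rw [sat_isPairF hM _ _ _ (fun i => Fin.cases hwM hv i)] at hw
    simp only [Fin.cons_succ, Fin.cons_zero, hb, hc] at hw
    obtain ⟨q₁, q₂, hq, hw'⟩ := mem_ordZF.1 hwO
    rw [hw'] at hw
    obtain ⟨e₁, e₂⟩ := ZFSet.pair_injective hw
    rwa [← hcP e₁, ← hcP e₂]
  · intro h
    have hwO : ZFSet.pair (cP b₀) (cP a₀) ∈ ordZF cP := mem_ordZF.2 ⟨b₀, a₀, h, rfl⟩
    have hwM : ZFSet.pair (cP b₀) (cP a₀) ∈ M := tmTrans hM hOM hwO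
    refine ⟨_, hwM, hwO, ?_⟩
    rw [sat_isPairF hM _ _ _ (fun i => Fin.cases hwM hv i)]
    simp only [Fin.cons_succ, Fin.cons_zero, hb, hc]

/-- `K` bounds all values decided at coordinates `≤ n` by conditions `≤ a`. -/
def IsBnd (Dec : P → ℕ → ℕ → Prop) (a : P) (n K : ℕ) : Prop :=
  ∀ b k m, b ≤ a → k ≤ n → Dec b k m → m ≤ K

theorem sat_bndF {M : ZFSet} (hM : IsTransModelZFC M) (hcP : Function.Injective cP)
    (hPM : ZFSet.range cP ∈ M) (hOM : ordZF cP ∈ M) (hDM : decZF cP Dec ∈ M)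
    {n : ℕ} {v : Fin n → ZFSet} {nn K D O c : Fin n} {n₀ K₀ : ℕ} {a₀ : P}
    (hnn : v nn = natZF n₀) (hK : v K = natZF K₀) (hD : v D = decZF cP Dec)
    (hO : v O = ordZF cP) (hc : v c = cP a₀) (hv : ∀ i, v i ∈ M) :
    SatM M (bndF nn K D O c) v ↔ IsBnd Dec a₀ n₀ K₀ := by
  simp only [bndF, satM_all, satM_imp, satM_mem, Fin.cons_succ, Fin.cons_zero, hD]
  constructor
  · intro h b k m hba hkn hDec
    have hwD : ZFSet.pair (cP b) (ZFSet.pair (natZF k) (natZF m)) ∈ decZF cP Dec :=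
      mem_decZF.2 ⟨b, k, m, hDec, rfl⟩
    have hwM := tmTrans hM hDM hwD
    have hbM : cP b ∈ M := cP_mem_M hM hPM b
    have hkM : natZF k ∈ M := natZF_mem_M hM k
    have hmM : natZF m ∈ M := natZF_mem_M hM m
    have h' := h _ hwM hwD (cP b) hbM (natZF k) hkM (natZF m) hmM
    set v4 : Fin (n+4) → ZFSet :=
      Fin.cons (natZF m) (Fin.cons (natZF k) (Fin.cons (cP b)
        (Fin.cons (ZFSet.pair (cP b) (ZFSet.pair (natZF k) (natZF m))) v))) with hv4
    have hv4M : ∀ i, v4 i ∈ M := fun i => by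
      refine Fin.cases hmM (fun j => ?_) i
      refine Fin.cases hkM (fun j => ?_) j
      refine Fin.cases hbM (fun j => ?_) j
      refine Fin.cases hwM (fun j => hv j) j
    have es : ∀ j : Fin n, v4 j.succ.succ.succ.succ = v j := fun j => by
      simp [hv4, Fin.cons_succ]
    have e3 : v4 3 = ZFSet.pair (cP b) (ZFSet.pair (natZF k) (natZF m)) := by
      rw [hv4, cons_three, cons_two, cons_one, Fin.cons_zero]
    have e2 : v4 2 = cP b := by rw [hv4, cons_two, cons_one, Fin.cons_zero]
    have e1 : v4 1 = natZF k := by rw [hv4, cons_one, Fin.cons_zero]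
    have e0 : v4 0 = natZF m := by rw [hv4, Fin.cons_zero]
    rw [sat_isTripleF hM _ _ _ _ hv4M, e3, e2, e1, e0] at h'
    have h'' := h' rfl
    rw [sat_inOrdF hM hcP hOM (b₀ := b) (a₀ := a₀) e2 ((es c).trans hc)
      ((es O).trans hO) hv4M] at h''
    have h3 := h'' hba
    rw [sat_leNatF (k0 := k) (l0 := n₀) e1 ((es nn).trans hnn)] at h3
    have h4 := h3 hkn
    rwa [sat_leNatF (k0 := m) (l0 := K₀) e0 ((es K).trans hK)] at h4
  · intro h w hwM hwD xb hxbM xk hxkM xm hxmM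
    obtain ⟨b, k, m, hDec, hweq⟩ := mem_decZF.1 hwD
    set v4 : Fin (n+4) → ZFSet := Fin.cons xm (Fin.cons xk (Fin.cons xb (Fin.cons w v)))
      with hv4
    have hv4M : ∀ i, v4 i ∈ M := fun i => by
      refine Fin.cases hxmM (fun j => ?_) i
      refine Fin.cases hxkM (fun j => ?_) j
      refine Fin.cases hxbM (fun j => ?_) j
      refine Fin.cases hwM (fun j => hv j) j
    have es : ∀ j : Fin n, v4 j.succ.succ.succ.succ = v j := fun j => by
      simp [hv4, Fin.cons_succ]
    have e3 : v4 3 = w := by rw [hv4, cons_three, cons_two, cons_one, Fin.cons_zero]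
    have e2 : v4 2 = xb := by rw [hv4, cons_two, cons_one, Fin.cons_zero]
    have e1 : v4 1 = xk := by rw [hv4, cons_one, Fin.cons_zero]
    have e0 : v4 0 = xm := by rw [hv4, Fin.cons_zero]
    rw [sat_isTripleF hM _ _ _ _ hv4M, e3, e2, e1, e0]
    intro htrip
    rw [hweq] at htrip
    obtain ⟨eb, hkm⟩ := ZFSet.pair_injective htrip
    obtain ⟨ek, em⟩ := ZFSet.pair_injective hkm
    rw [sat_inOrdF hM hcP hOM (b₀ := b) (a₀ := a₀) (by rw [e2, eb])
      ((es c).trans hc) ((es O).trans hO) hv4M]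
    intro hba
    rw [sat_leNatF (k0 := k) (l0 := n₀) (by rw [e1, ek]) ((es nn).trans hnn)]
    intro hkn
    rw [sat_leNatF (k0 := m) (l0 := K₀) (by rw [e0, em]) ((es K).trans hK)]
    exact h b k m hba hkn hDec

end Aux5
section Aux6

open ZFSet

variable {P : Type} [Preorder P] {cP : P → ZFSet} {Dec : P → ℕ → ℕ → Prop}

/-- The graph of the least-bound function is in `M`. -/
theorem tmGraph {M : ZFSet} (hM : IsTransModelZFC M) (hcP : Function.Injective cP)
    (hPM : ZFSet.range cP ∈ M) (hOM : ordZF cP ∈ M) (hDM : decZF cP Dec ∈ M)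
    (a : P) (g : ℕ → ℕ)
    (hg1 : ∀ n, IsBnd Dec a n (g n))
    (hg2 : ∀ n K', K' < g n → ¬ IsBnd Dec a n K') : funZF g ∈ M := by
  obtain ⟨Ω, hΩM, hΩ⟩ := tmOmega hM
  obtain ⟨C₁, hC₁M, hC₁⟩ := tmPowSup hM hΩM
  obtain ⟨C₂, hC₂M, hC₂⟩ := tmPowSup hM hC₁M
  have hca : cP a ∈ M := cP_mem_M hM hPM a
  set pv : Fin 4 → ZFSet :=
    Fin.cons Ω (Fin.cons (decZF cP Dec) (Fin.cons (ordZF cP) (Fin.cons (cP a) Fin.elim0)))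
    with hpv
  have hpvM : ∀ i, pv i ∈ M := fun i => by
    refine Fin.cases hΩM (fun j => ?_) i
    refine Fin.cases hDM (fun j => ?_) j
    refine Fin.cases hOM (fun j => ?_) j
    refine Fin.cases hca (fun j => j.elim0) j
  obtain ⟨S, hSM, hS⟩ := tmSep hM (n := 4) graphF hC₂M hpvM
  -- key satisfaction characterisation
  have key : ∀ z, z ∈ M → (SatM M graphF (Fin.cons z pv) ↔
      ∃ n K : ℕ, z = ZFSet.pair (natZF n) (natZF K) ∧ IsBnd Dec a n K ∧
        ∀ K' < K, ¬ IsBnd Dec a n K') := by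
    intro z hzM
    have hvM : ∀ i, (Fin.cons z pv : Fin 5 → ZFSet) i ∈ M := fun i =>
      Fin.cases hzM hpvM i
    rw [graphF, satM_ex]
    constructor
    · rintro ⟨x, hxM, hsat⟩
      rw [satM_and, satM_mem, satM_ex] at hsat
      obtain ⟨hxΩ, y, hyM, hsat⟩ := hsat
      rw [satM_and, satM_mem] at hsat
      obtain ⟨hyΩ, hsat⟩ := hsat
      rw [satM_and, satM_and] at hsat
      obtain ⟨hpair, hbnd, hmin⟩ := hsat
      obtain ⟨n, rfl⟩ := hΩ x |>.1 (by exact hxΩ)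
      obtain ⟨K, rfl⟩ := hΩ y |>.1 (by exact hyΩ)
      set v7 : Fin 7 → ZFSet := Fin.cons (natZF K) (Fin.cons (natZF n) (Fin.cons z pv))
        with hv7
      have hv7M : ∀ i, v7 i ∈ M := fun i => by
        refine Fin.cases (natZF_mem_M hM K) (fun j => ?_) i
        refine Fin.cases (natZF_mem_M hM n) (fun j => hvM j) j
      rw [sat_isPairF hM _ _ _ hv7M] at hpair
      have hzeq : z = ZFSet.pair (natZF n) (natZF K) := hpair
      rw [sat_bndF hM hcP hPM hOM hDM (n₀ := n) (K₀ := K) (a₀ := a)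
        rfl rfl rfl rfl rfl hv7M] at hbnd
      refine ⟨n, K, hzeq, hbnd, ?_⟩
      intro K' hK'
      rw [satM_all] at hmin
      have h8 := hmin (natZF K') (natZF_mem_M hM K')
      rw [satM_imp, satM_mem, satM_neg] at h8
      have h8' := h8 (by exact natZF_mem_natZF.2 hK')
      have hv8M : ∀ i, (Fin.cons (natZF K') v7 : Fin 8 → ZFSet) i ∈ M := fun i =>
        Fin.cases (natZF_mem_M hM K') hv7M i
      rw [sat_bndF hM hcP hPM hOM hDM (n₀ := n) (K₀ := K') (a₀ := a)
        rfl rfl rfl rfl rfl hv8M] at h8'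
      exact h8'
    · rintro ⟨n, K, hzeq, hbnd, hmin⟩
      refine ⟨natZF n, natZF_mem_M hM n, ?_⟩
      rw [satM_and, satM_mem, satM_ex]
      refine ⟨hΩ _ |>.2 ⟨n, rfl⟩, natZF K, natZF_mem_M hM K, ?_⟩
      rw [satM_and, satM_mem]
      refine ⟨hΩ _ |>.2 ⟨K, rfl⟩, ?_⟩
      rw [satM_and, satM_and]
      set v7 : Fin 7 → ZFSet := Fin.cons (natZF K) (Fin.cons (natZF n) (Fin.cons z pv))
        with hv7
      have hv7M : ∀ i, v7 i ∈ M := fun i => by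
        refine Fin.cases (natZF_mem_M hM K) (fun j => ?_) i
        refine Fin.cases (natZF_mem_M hM n) (fun j => hvM j) j
      refine ⟨?_, ?_, ?_⟩
      · rw [sat_isPairF hM _ _ _ hv7M]
        exact hzeq
      · rw [sat_bndF hM hcP hPM hOM hDM (n₀ := n) (K₀ := K) (a₀ := a)
          rfl rfl rfl rfl rfl hv7M]
        exact hbnd
      · rw [satM_all]
        intro K' hK'M
        rw [satM_imp, satM_mem, satM_neg]
        intro hK'K
        have hv8M : ∀ i, (Fin.cons K' v7 : Fin 8 → ZFSet) i ∈ M := fun i =>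
          Fin.cases hK'M hv7M i
        obtain ⟨j, hj, rfl⟩ : ∃ j < K, K' = natZF j := by
          have : K' ∈ natZF K := hK'K
          exact mem_natZF.1 this
        rw [sat_bndF hM hcP hPM hOM hDM (n₀ := n) (K₀ := j) (a₀ := a)
          rfl rfl rfl rfl rfl hv8M]
        exact hmin j hj
  -- S = funZF g
  have hSeq : S = funZF g := by
    apply ZFSet.ext
    intro z
    rw [hS z, mem_funZF]
    constructor
    · rintro ⟨hzC, hsat⟩
      have hzM : z ∈ M := tmTrans hM hC₂M hzC
      obtain ⟨n, K, hzeq, hbnd, hmin⟩ := (key z hzM).1 hsat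
      have : K = g n := by
        rcases Nat.lt_trichotomy K (g n) with h | h | h
        · exact absurd hbnd (hg2 n K h)
        · exact h
        · exact absurd (hg1 n) (hmin _ h)
      exact ⟨n, by rw [hzeq, this]⟩
    · rintro ⟨n, rfl⟩
      have hnΩ : natZF n ∈ Ω := hΩ _ |>.2 ⟨n, rfl⟩
      have hgΩ : natZF (g n) ∈ Ω := hΩ _ |>.2 ⟨g n, rfl⟩
      have hsM : ({natZF n} : ZFSet) ∈ M := tmSingleton hM (natZF_mem_M hM n)
      have hdM : ({natZF n, natZF (g n)} : ZFSet) ∈ M :=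
        tmUpair hM (natZF_mem_M hM n) (natZF_mem_M hM (g n))
      have hsC₁ : ({natZF n} : ZFSet) ∈ C₁ := hC₁ _ hsM (fun t ht => by
        rw [mem_singleton] at ht; rw [ht]; exact hnΩ)
      have hdC₁ : ({natZF n, natZF (g n)} : ZFSet) ∈ C₁ := hC₁ _ hdM (fun t ht => by
        rcases mem_pair.1 ht with rfl | rfl
        · exact hnΩ
        · exact hgΩ)
      have hzM : ZFSet.pair (natZF n) (natZF (g n)) ∈ M :=
        tmPair hM (natZF_mem_M hM n) (natZF_mem_M hM (g n))
      have hzC₂ : ZFSet.pair (natZF n) (natZF (g n)) ∈ C₂ := hC₂ _ hzM (fun t ht => by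
        rcases mem_pair.1 ht with rfl | rfl
        · exact hsC₁
        · exact hdC₁)
      refine ⟨hzC₂, (key _ hzM).2 ⟨n, g n, rfl, hg1 n, fun K' h => hg2 n K' h⟩⟩
  rw [← hSeq]
  exact hSM

end Aux6
section Aux7

open ZFSet

/-- Key lemma: below any condition, arbitrarily large values are decided at a
bounded set of coordinates. -/
theorem unbounded_below {M : ZFSet} (hM : IsTransModelZFC M) {P : Type} [Preorder P]
    {cP : P → ZFSet} (hcP : Function.Injective cP) (hPM : ZFSet.range cP ∈ M)
    (hOM : ordZF cP ∈ M) {Dec : P → ℕ → ℕ → Prop} (hDM : decZF cP Dec ∈ M) {p : P}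
    (hunb : ∀ g : ℕ → ℕ, funZF g ∈ M → ∀ a : P, a ≤ p → ∀ N : ℕ,
      ∃ b : P, b ≤ a ∧ ∃ n m, N ≤ n ∧ Dec b n m ∧ g n < m)
    (a : P) (ha : a ≤ p) :
    ∃ s : ℕ, ∀ K : ℕ, ∃ b, b ≤ a ∧ ∃ t, t ≤ s ∧ ∃ m, K < m ∧ Dec b t m := by
  by_contra hcon
  push_neg at hcon
  have hbnd : ∀ s, ∃ K, IsBnd Dec a s K := by
    intro s
    obtain ⟨K, hK⟩ := hcon s
    refine ⟨K, fun b k m hba hks hDec => ?_⟩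
    by_contra hlt
    exact hK b hba k hks m (not_le.1 hlt) hDec
  set g : ℕ → ℕ := fun n => sInf {K | IsBnd Dec a n K} with hg
  have hg1 : ∀ n, IsBnd Dec a n (g n) := fun n => Nat.sInf_mem (hbnd n)
  have hg2 : ∀ n K', K' < g n → ¬ IsBnd Dec a n K' := fun n K' h =>
    Nat.notMem_of_lt_sInf h
  have hgM := tmGraph hM hcP hPM hOM hDM a g hg1 hg2
  obtain ⟨b, hba, n, m, _, hDec, hlt⟩ := hunb g hgM a ha 0
  exact absurd (hg1 n b n m hba le_rfl hDec) (not_le.2 hlt)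

/-- The collection of dense subsets of `P` coded in `M` is countable and nonempty. -/
theorem dense_family_countable {M : ZFSet} (hMc : M.toSet.Countable) {P : Type} [Preorder P]
    {cP : P → ZFSet} (hcP : Function.Injective cP) (hPM : ZFSet.range cP ∈ M) :
    ∃ e : ℕ → Set P,
      {D : Set P | subsetZF cP D ∈ M ∧ ∀ a : P, ∃ b ∈ D, b ≤ a} = Set.range e := by
  set 𝒟 := {D : Set P | subsetZF cP D ∈ M ∧ ∀ a : P, ∃ b ∈ D, b ≤ a} with h𝒟
  have hinj : Function.Injective (fun D : Set P => subsetZF cP D) := by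
    intro D D' h
    ext a
    have : ∀ (E : Set P), a ∈ E ↔ cP a ∈ subsetZF cP E := by
      intro E
      rw [mem_subsetZF]
      exact ⟨fun h => ⟨a, h, rfl⟩, fun ⟨a', ha', he⟩ => by rwa [← hcP he]⟩
    rw [this D, this D', show subsetZF cP D = subsetZF cP D' from h]
  have hsub : 𝒟 ⊆ (fun D : Set P => subsetZF cP D) ⁻¹' M.toSet := fun D hD => hD.1
  have hcnt : 𝒟.Countable := (hMc.preimage hinj).mono hsub
  have huniv : Set.univ ∈ 𝒟 := by
    constructor
    · have : subsetZF cP Set.univ = ZFSet.range cP := by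
        apply ZFSet.ext
        intro z
        rw [mem_subsetZF, ZFSet.mem_range]
        constructor
        · rintro ⟨a, _, rfl⟩; exact ⟨a, rfl⟩
        · rintro ⟨a, rfl⟩; exact ⟨a, trivial, rfl⟩
      rwa [this]
    · exact fun a => ⟨a, trivial, le_refl a⟩
  exact hcnt.exists_eq_range ⟨_, huniv⟩

end Aux7

/-- Let `M₀, M₁` be countable transitive models of ZFC, with `M₀ ⊨ “P is a poset, p ∈ P,
and p ⊩ ẋ ∈ ω^ω is an increasing function not eventually dominated by any ground model
function”` (the name `ẋ` presented by its deciding relation `Dec₀ ∈ M₀`), and similarly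
for `M₁, Q, q, ẏ, Dec₁`. Then for every `f ∈ ω^ω` there are an `M₀`-generic `G ∋ p` and an
`M₁`-generic `H ∋ q` such that `n ↦ max((ẋ/G)(n), (ẏ/H)(n))` eventually dominates `f`. -/
theorem mutual_generics_with_max_dominating
    (M₀ M₁ : ZFSet) (hM₀ : IsTransModelZFC M₀) (hM₁ : IsTransModelZFC M₁)
    (hM₀c : M₀.toSet.Countable) (hM₁c : M₁.toSet.Countable)
    (P : Type) [Preorder P] (cP : P → ZFSet) (hcP : Function.Injective cP)
    (hPM : ZFSet.range cP ∈ M₀) (hPordM : ordZF cP ∈ M₀)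
    (Q : Type) [Preorder Q] (cQ : Q → ZFSet) (hcQ : Function.Injective cQ)
    (hQM : ZFSet.range cQ ∈ M₁) (hQordM : ordZF cQ ∈ M₁)
    (p : P) (q : Q)
    (Dec₀ : P → ℕ → ℕ → Prop) (hDec₀M : decZF cP Dec₀ ∈ M₀)
    (Dec₁ : Q → ℕ → ℕ → Prop) (hDec₁M : decZF cQ Dec₁ ∈ M₁)
    -- `Dec₀` is a name for an element of `ω^ω`:
    (h₀pers : ∀ a b : P, a ≤ b → ∀ n m, Dec₀ b n m → Dec₀ a n m)
    (h₀uniq : ∀ (a : P) (n m m' : ℕ), Dec₀ a n m → Dec₀ a n m' → m = m')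
    (h₀tot : ∀ a : P, a ≤ p → ∀ n : ℕ, ∃ b : P, b ≤ a ∧ ∃ m, Dec₀ b n m)
    -- `p` forces `ẋ` increasing:
    (h₀incr : ∀ a : P, a ≤ p → ∀ n n' m m', Dec₀ a n m → Dec₀ a n' m' → n ≤ n' → m ≤ m')
    -- `p` forces `ẋ` not eventually dominated by any ground model function:
    (h₀unb : ∀ g : ℕ → ℕ, funZF g ∈ M₀ → ∀ a : P, a ≤ p → ∀ N : ℕ,
      ∃ b : P, b ≤ a ∧ ∃ n m, N ≤ n ∧ Dec₀ b n m ∧ g n < m)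
    (h₁pers : ∀ a b : Q, a ≤ b → ∀ n m, Dec₁ b n m → Dec₁ a n m)
    (h₁uniq : ∀ (a : Q) (n m m' : ℕ), Dec₁ a n m → Dec₁ a n m' → m = m')
    (h₁tot : ∀ a : Q, a ≤ q → ∀ n : ℕ, ∃ b : Q, b ≤ a ∧ ∃ m, Dec₁ b n m)
    (h₁incr : ∀ a : Q, a ≤ q → ∀ n n' m m', Dec₁ a n m → Dec₁ a n' m' → n ≤ n' → m ≤ m')
    (h₁unb : ∀ g : ℕ → ℕ, funZF g ∈ M₁ → ∀ a : Q, a ≤ q → ∀ N : ℕ,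
      ∃ b : Q, b ≤ a ∧ ∃ n m, N ≤ n ∧ Dec₁ b n m ∧ g n < m)
    (f : ℕ → ℕ) :
    ∃ G : Set P, ∃ H : Set Q,
      IsGenericFilter M₀ cP G ∧ IsGenericFilter M₁ cQ H ∧ p ∈ G ∧ q ∈ H ∧
      ∃ x y : ℕ → ℕ,
        (∀ n, ∃ a ∈ G, Dec₀ a n (x n)) ∧ (∀ n, ∃ b ∈ H, Dec₁ b n (y n)) ∧
        ∀ᶠ n in atTop, f n ≤ max (x n) (y n) := by
  classical
  -- a monotone majorant of f
  set F : ℕ → ℕ := fun n => (Finset.range (n+1)).sup f with hF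
  have hFmono : Monotone F := fun i j hij =>
    Finset.sup_mono (Finset.range_subset_range.2 (by omega))
  have hfF : ∀ n, f n ≤ F n := fun n => Finset.le_sup (Finset.self_mem_range_succ n)
  -- enumerations of the coded dense families
  obtain ⟨e₀, he₀⟩ := dense_family_countable hM₀c hcP hPM
  obtain ⟨e₁, he₁⟩ := dense_family_countable hM₁c hcQ hQM
  have he₀D : ∀ r, ∀ a : P, ∃ b ∈ e₀ r, b ≤ a := by
    intro r
    have : e₀ r ∈ {D : Set P | subsetZF cP D ∈ M₀ ∧ ∀ a : P, ∃ b ∈ D, b ≤ a} := by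
      rw [he₀]; exact ⟨r, rfl⟩
    exact this.2
  have he₁D : ∀ r, ∀ a : Q, ∃ b ∈ e₁ r, b ≤ a := by
    intro r
    have : e₁ r ∈ {D : Set Q | subsetZF cQ D ∈ M₁ ∧ ∀ a : Q, ∃ b ∈ D, b ≤ a} := by
      rw [he₁]; exact ⟨r, rfl⟩
    exact this.2
  -- the two bounded-coordinate unboundedness lemmas
  have lemP : ∀ a : P, a ≤ p →
      ∃ s : ℕ, ∀ K : ℕ, ∃ b, b ≤ a ∧ ∃ t, t ≤ s ∧ ∃ m, K < m ∧ Dec₀ b t m :=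
    fun a ha => unbounded_below hM₀ hcP hPM hPordM hDec₀M h₀unb a ha
  have lemQ : ∀ b : Q, b ≤ q →
      ∃ s : ℕ, ∀ K : ℕ, ∃ c, c ≤ b ∧ ∃ t, t ≤ s ∧ ∃ m, K < m ∧ Dec₁ c t m :=
    fun b hb => unbounded_below hM₁ hcQ hQM hQordM hDec₁M h₁unb b hb
  -- the recursive construction
  let GoodP : P → ℕ → Prop := fun a R =>
    ∀ K : ℕ, ∃ b, b ≤ a ∧ ∃ t, t ≤ R ∧ ∃ m, K < m ∧ Dec₀ b t m
  let St := {x : P × Q × ℕ // x.1 ≤ p ∧ x.2.1 ≤ q ∧ GoodP x.1 x.2.2}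
  let Rel : ℕ → St → St → Prop := fun r S S' =>
    S'.1.1 ≤ S.1.1 ∧ S'.1.2.1 ≤ S.1.2.1 ∧
    (∃ d ∈ e₀ r, S'.1.1 ≤ d) ∧ (∃ d ∈ e₁ r, S'.1.2.1 ≤ d) ∧
    (∃ μ, Dec₀ S'.1.1 r μ) ∧ (∃ μ, Dec₁ S'.1.2.1 r μ) ∧
    ∃ R', S.1.2.2 < R' ∧ R' < S'.1.2.2 ∧
      (∃ t m, t ≤ S.1.2.2 ∧ Dec₀ S'.1.1 t m ∧ ∀ j < R', f j < m) ∧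
      (∃ t m, t ≤ R' ∧ Dec₁ S'.1.2.1 t m ∧ ∀ j < S'.1.2.2, f j < m)
  have hstep : ∀ (r : ℕ) (S : St), ∃ S' : St, Rel r S S' := by
    rintro r ⟨⟨a, b, R⟩, hap, hbq, hGood⟩
    obtain ⟨sb, hsb⟩ := lemQ b hbq
    set R' := max (R+1) sb with hR'
    obtain ⟨a1, ha1, t, htR, m, hm, hDec⟩ := hGood (F R')
    obtain ⟨d, hdD, hda⟩ := he₀D r a1
    have hdp : d ≤ p := le_trans (le_trans hda ha1) hap
    obtain ⟨a2, ha2, μ, hμ⟩ := h₀tot d hdp r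
    have ha2p : a2 ≤ p := le_trans ha2 hdp
    -- Y side
    obtain ⟨sa, hsa⟩ := lemP a2 ha2p
    set R'' := max (max (R'+1) sa) (r+1) with hR''
    obtain ⟨b1, hb1, t', ht', m', hm', hDec'⟩ := hsb (F R'')
    obtain ⟨d', hd'D, hd'b⟩ := he₁D r b1
    have hd'q : d' ≤ q := le_trans (le_trans hd'b hb1) hbq
    obtain ⟨b2, hb2, μ', hμ'⟩ := h₁tot d' hd'q r
    have hb2q : b2 ≤ q := le_trans hb2 hd'q
    have ha2a : a2 ≤ a := le_trans (le_trans ha2 hda) ha1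
    have hb2b : b2 ≤ b := le_trans (le_trans hb2 hd'b) hb1
    refine ⟨⟨(a2, b2, R''), ha2p, hb2q, ?_⟩, ha2a, hb2b,
      ⟨d, hdD, ha2⟩, ⟨d', hd'D, hb2⟩, ⟨μ, hμ⟩, ⟨μ', hμ'⟩,
      R', (by show R < R'; omega), (by show R' < R''; omega), ?_, ?_⟩
    · -- GoodP a2 R''
      intro K
      obtain ⟨c, hc, tt, htt, mm, hmm, hdd⟩ := hsa K
      exact ⟨c, hc, tt, (by show tt ≤ R''; omega), mm, hmm, hdd⟩
    · refine ⟨t, m, htR, h₀pers a2 a1 (le_trans ha2 hda) t m hDec, ?_⟩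
      intro j hj
      exact lt_of_le_of_lt (le_trans (hfF j) (hFmono (by omega : j ≤ R'))) hm
    · refine ⟨t', m', by omega, h₁pers b2 b1 (le_trans hb2 hd'b) t' m' hDec', ?_⟩
      intro j hj
      have hj' : j < R'' := hj
      exact lt_of_le_of_lt (le_trans (hfF j) (hFmono (by omega : j ≤ R''))) hm'
  choose stepf hRel using hstep
  obtain ⟨s0, hs0⟩ := lemP p le_rfl
  have hs0' : GoodP p s0 := hs0
  let S0 : St := ⟨(p, q, s0), le_rfl, le_rfl, hs0'⟩
  let seq : ℕ → St := fun n => Nat.rec S0 (fun r S => stepf r S) n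
  have hseqS : ∀ r, Rel r (seq r) (seq (r+1)) := fun r => hRel r (seq r)
  let aP : ℕ → P := fun r => (seq r).1.1
  let bQ : ℕ → Q := fun r => (seq r).1.2.1
  let RR : ℕ → ℕ := fun r => (seq r).1.2.2
  have haP : ∀ r, aP r ≤ p := fun r => (seq r).2.1
  have hbQ : ∀ r, bQ r ≤ q := fun r => (seq r).2.2.1
  have hamono : ∀ {r r'}, r ≤ r' → aP r' ≤ aP r := by
    intro r r' h
    induction h with
    | refl => exact le_rfl
    | step h ih => exact le_trans (hseqS _).1 ih
  have hbmono : ∀ {r r'}, r ≤ r' → bQ r' ≤ bQ r := by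
    intro r r' h
    induction h with
    | refl => exact le_rfl
    | step h ih => exact le_trans (hseqS _).2.1 ih
  have hRmono : StrictMono RR := by
    apply strictMono_nat_of_lt_succ
    intro r
    obtain ⟨R', h1, h2, _⟩ := (hseqS r).2.2.2.2.2.2
    show (seq r).1.2.2 < (seq (r+1)).1.2.2
    omega
  have hxex : ∀ n, ∃ μ, Dec₀ (aP (n+1)) n μ := fun n => (hseqS n).2.2.2.2.1
  have hyex : ∀ n, ∃ μ, Dec₁ (bQ (n+1)) n μ := fun n => (hseqS n).2.2.2.2.2.1
  choose x hx using hxex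
  choose y hy using hyex
  refine ⟨{c : P | ∃ r, aP r ≤ c}, {c : Q | ∃ r, bQ r ≤ c}, ⟨?_, ?_, ?_⟩, ⟨?_, ?_, ?_⟩,
    ⟨0, le_rfl⟩, ⟨0, le_rfl⟩, x, y,
    fun n => ⟨aP (n+1), ⟨n+1, le_rfl⟩, hx n⟩, fun n => ⟨bQ (n+1), ⟨n+1, le_rfl⟩, hy n⟩, ?_⟩
  · rintro c ⟨r, hr⟩ c' hcc'
    exact ⟨r, le_trans hr hcc'⟩
  · rintro c ⟨r, hr⟩ c' ⟨r', hr'⟩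
    exact ⟨aP (max r r'), ⟨max r r', le_rfl⟩,
      le_trans (hamono (le_max_left _ _)) hr, le_trans (hamono (le_max_right _ _)) hr'⟩
  · intro D hD hDd
    have : D ∈ Set.range e₀ := by
      rw [← he₀]; exact ⟨hD, hDd⟩
    obtain ⟨r, rfl⟩ := this
    obtain ⟨d, hdD, hle⟩ := (hseqS r).2.2.1
    exact ⟨d, ⟨r+1, hle⟩, hdD⟩
  · rintro c ⟨r, hr⟩ c' hcc'
    exact ⟨r, le_trans hr hcc'⟩
  · rintro c ⟨r, hr⟩ c' ⟨r', hr'⟩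
    exact ⟨bQ (max r r'), ⟨max r r', le_rfl⟩,
      le_trans (hbmono (le_max_left _ _)) hr, le_trans (hbmono (le_max_right _ _)) hr'⟩
  · intro D hD hDd
    have : D ∈ Set.range e₁ := by
      rw [← he₁]; exact ⟨hD, hDd⟩
    obtain ⟨r, rfl⟩ := this
    obtain ⟨d, hdD, hle⟩ := (hseqS r).2.2.2.1
    exact ⟨d, ⟨r+1, hle⟩, hdD⟩
  · -- eventual domination
    rw [Filter.eventually_atTop]
    refine ⟨RR 0, fun j hj => ?_⟩
    obtain ⟨r, hr1, hr2⟩ : ∃ r, RR r ≤ j ∧ j < RR (r+1) := by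
      refine ⟨Nat.findGreatest (fun i => RR i ≤ j) j, ?_, ?_⟩
      · exact Nat.findGreatest_spec (P := fun i => RR i ≤ j) (n := j) (m := 0) (Nat.zero_le j) hj
      · by_contra hcon
        push_neg at hcon
        have h1 : Nat.findGreatest (fun i => RR i ≤ j) j + 1 ≤ j :=
          le_trans (hRmono.le_apply) hcon
        exact Nat.findGreatest_is_greatest (Nat.lt_succ_self _) h1 hcon
    obtain ⟨R', hRR', hR'R, ⟨t, m, htR, hDec, hcov⟩, ⟨t', m', ht'R, hDec', hcov'⟩⟩ :=
      (hseqS r).2.2.2.2.2.2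
    rcases lt_or_ge j R' with hcase | hcase
    · -- x covers
      have hfj : f j < m := hcov j hcase
      have hd1 : Dec₀ (aP (max (r+1) (j+1))) t m :=
        h₀pers _ _ (hamono (le_max_left _ _)) t m hDec
      have hd2 : Dec₀ (aP (max (r+1) (j+1))) j (x j) :=
        h₀pers _ _ (hamono (le_max_right _ _)) j (x j) (hx j)
      have hmx : m ≤ x j :=
        h₀incr _ (haP _) t j m (x j) hd1 hd2 (le_trans htR hr1)
      exact le_trans (le_of_lt (lt_of_lt_of_le hfj hmx)) (le_max_left _ _)
    · -- y covers
      have hfj : f j < m' := hcov' j hr2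
      have hd1 : Dec₁ (bQ (max (r+1) (j+1))) t' m' :=
        h₁pers _ _ (hbmono (le_max_left _ _)) t' m' hDec'
      have hd2 : Dec₁ (bQ (max (r+1) (j+1))) j (y j) :=
        h₁pers _ _ (hbmono (le_max_right _ _)) j (y j) (hy j)
      have hmy : m' ≤ y j :=
        h₁incr _ (hbQ _) t' j m' (y j) hd1 hd2 (le_trans ht'R hcase)
      exact le_trans (le_of_lt (lt_of_lt_of_le hfj hmy)) (le_max_right _ _)

end
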